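/- Let k be a normed division ring, n ≥ 1, and a_1,…,a_n ∈ k; define P and Q on suffixes by P[] = 0, Q[] = 1, P[a_i,…,a_n] = Q[a_{i+1},…,a_n], Q[a_i,…,a_n] = a_i·Q[a_{i+1},…,a_n] + P[a_{i+1},…,a_n], and suppose Q[a_i,…,a_n] ≠ 0 for every 1 ≤ i ≤ n. Let x₀ ∈ k with forward orbit x_0 = x₀, x_{i+1} = (x_i)⁻¹ − a_{i+1}, and assume x_i ≠ 0 for 0 ≤ i ≤ n−1. Then ‖P[a_1,…,a_n]·(Q[a_1,…,a_n])⁻¹ − x₀‖ = (∏_{i=0}^{n} ‖x_i‖)/‖Q[a_1,…,a_n]‖. -/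

import Mathlib

/-- `(P l, Q l)` for a digit list `l = [a_i, …, a_n]`:
`P [] = 0`, `Q [] = 1`, `P (a :: l) = Q l`, `Q (a :: l) = a * Q l + P l`. -/
def cfPQ {k : Type*} [DivisionRing k] : List k → k × k
  | [] => (0, 1)
  | a :: l => ((cfPQ l).2, a * (cfPQ l).2 + (cfPQ l).1)

/-- The digit list `[a_i, a_{i+1}, …, a_n]`. -/
def suffList {k : Type*} (a : ℕ → k) (i n : ℕ) : List k :=
  (List.range (n + 1 - i)).map (fun j => a (i + j))

lemma suffList_eq_nil {k : Type*} (a : ℕ → k) (n : ℕ) : suffList a (n + 1) n = [] := by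
  simp [suffList]

lemma suffList_cons {k : Type*} (a : ℕ → k) {i n : ℕ} (h : i ≤ n) :
    suffList a i n = a i :: suffList a (i + 1) n := by
  unfold suffList
  have h1 : n + 1 - i = (n - i) + 1 := by omega
  have h2 : n + 1 - (i + 1) = n - i := by omega
  rw [h1, h2, List.range_succ_eq_map, List.map_cons, List.map_map]
  congr 1
  apply List.map_congr_left
  intro j _
  simp [Function.comp]
  congr 1
  omega

lemma inv_sub_inv'' {k : Type*} [DivisionRing k] {u v : k} (hu : u ≠ 0) (hv : v ≠ 0) :
    u⁻¹ - v⁻¹ = u⁻¹ * (v - u) * v⁻¹ := by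
  rw [mul_sub, inv_mul_cancel₀ hu, sub_mul, one_mul, mul_assoc, mul_inv_cancel₀ hv, mul_one]

lemma cf_pq_product_aux {k : Type*} [NormedDivisionRing k]
    (n : ℕ) (a : ℕ → k)
    (hQ : ∀ i, 1 ≤ i → i ≤ n → (cfPQ (suffList a i n)).2 ≠ 0)
    (x : ℕ → k)
    (hstep : ∀ i, x (i + 1) = (x i)⁻¹ - a (i + 1))
    (hxne : ∀ i < n, x i ≠ 0) :
    ∀ m i, i + m = n →
      ‖(cfPQ (suffList a (i + 1) n)).1 * ((cfPQ (suffList a (i + 1) n)).2)⁻¹ - x i‖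
        = (∏ j ∈ Finset.Ico i (n + 1), ‖x j‖) / ‖(cfPQ (suffList a (i + 1) n)).2‖ := by
  intro m
  induction m with
  | zero =>
    intro i hi
    have : i = n := by omega
    subst this
    rw [suffList_eq_nil]
    simp [cfPQ, Nat.Ico_succ_singleton]
  | succ m ih =>
    intro i hi
    have hi_lt : i < n := by omega
    have hcons : suffList a (i + 1) n = a (i + 1) :: suffList a (i + 2) n := by
      have := suffList_cons a (show i + 1 ≤ n by omega)
      simpa using this
    set A := a (i + 1) with hA
    set P' := (cfPQ (suffList a (i + 2) n)).1 with hP'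
    set Q' := (cfPQ (suffList a (i + 2) n)).2 with hQ'def
    have hPQ : cfPQ (suffList a (i + 1) n) = (Q', A * Q' + P') := by
      rw [hcons]; rfl
    have hQ'ne : Q' ≠ 0 := by
      by_cases h : i + 2 ≤ n
      · exact hQ (i + 2) (by omega) h
      · have : i + 2 = n + 1 := by omega
        rw [hQ'def, this, suffList_eq_nil]
        simp [cfPQ]
    have hQne : A * Q' + P' ≠ 0 := by
      have := hQ (i + 1) (by omega) (by omega)
      rw [hPQ] at this
      exact this
    have hxi : x i ≠ 0 := hxne i hi_lt
    have hv : x (i + 1) + A = (x i)⁻¹ := by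
      rw [hstep i, sub_add_cancel]
    have hvne : x (i + 1) + A ≠ 0 := by
      rw [hv]
      exact inv_ne_zero hxi
    have hueq : P' * Q'⁻¹ + A = (A * Q' + P') * Q'⁻¹ := by
      rw [add_mul, mul_assoc, mul_inv_cancel₀ hQ'ne, mul_one, add_comm]
    have hune : P' * Q'⁻¹ + A ≠ 0 := by
      rw [hueq]
      exact mul_ne_zero hQne (inv_ne_zero hQ'ne)
    have hinv : Q' * (A * Q' + P')⁻¹ = (P' * Q'⁻¹ + A)⁻¹ := by
      rw [hueq, mul_inv_rev, inv_inv]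
    have hxinv : x i = (x (i + 1) + A)⁻¹ := by
      rw [hv, inv_inv]
    have IH := ih (i + 1) (by omega)
    have key : (cfPQ (suffList a (i + 1) n)).1 * ((cfPQ (suffList a (i + 1) n)).2)⁻¹ - x i
        = (P' * Q'⁻¹ + A)⁻¹ * ((x (i + 1) + A) - (P' * Q'⁻¹ + A)) * (x (i + 1) + A)⁻¹ := by
      rw [hPQ]
      dsimp only
      rw [hinv, hxinv]
      exact inv_sub_inv'' hune hvne
    rw [key, hPQ]
    dsimp only
    have hdiff : (x (i + 1) + A) - (P' * Q'⁻¹ + A) = -(P' * Q'⁻¹ - x (i + 1)) := by abel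
    rw [hdiff]
    rw [norm_mul, norm_mul, norm_neg, norm_inv, norm_inv, hueq, norm_mul, norm_inv, hv,
      norm_inv, inv_inv]
    have hIH' : ‖P' * Q'⁻¹ - x (i + 1)‖
        = (∏ j ∈ Finset.Ico (i + 1) (n + 1), ‖x j‖) / ‖Q'‖ := by
      have h2 : i + 1 + 1 = i + 2 := by omega
      rw [h2] at IH
      exact IH
    rw [hIH']
    rw [Finset.prod_eq_prod_Ico_succ_bot (show i < n + 1 by omega)]
    have hQn : ‖A * Q' + P'‖ ≠ 0 := norm_ne_zero_iff.mpr hQne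
    have hQ'n : ‖Q'‖ ≠ 0 := norm_ne_zero_iff.mpr hQ'ne
    have hxn : ‖x i‖ ≠ 0 := norm_ne_zero_iff.mpr hxi
    field_simp

/-- Corollary 2.4 (pqproduct) of the paper: the approximation error of the
`n`-th convergent equals `∏_{i=0}^{n} ‖x_i‖ / ‖Q_n‖`. -/
theorem cf_pq_product {k : Type*} [NormedDivisionRing k]
    (n : ℕ) (hn : 1 ≤ n) (a : ℕ → k)
    (hQ : ∀ i, 1 ≤ i → i ≤ n → (cfPQ (suffList a i n)).2 ≠ 0)
    (x₀ : k) (x : ℕ → k) (hx0 : x 0 = x₀)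
    (hstep : ∀ i, x (i + 1) = (x i)⁻¹ - a (i + 1))
    (hxne : ∀ i < n, x i ≠ 0) :
    ‖(cfPQ (suffList a 1 n)).1 * ((cfPQ (suffList a 1 n)).2)⁻¹ - x₀‖
      = (∏ i ∈ Finset.range (n + 1), ‖x i‖) / ‖(cfPQ (suffList a 1 n)).2‖ := by
  rw [← hx0, Finset.range_eq_Ico]
  exact cf_pq_product_aux n a hQ x hstep hxne n 0 (by omega)
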